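/- Suppose every fixed level value (the initial levels H_i(t_0) for 1 ≤ i ≤ N and the boundary levels H_1(t_j) for 1 ≤ j ≤ T) exceeds H_b, and let an assignment of the interior variables satisfy H_i(t_j) > H_b for all 2 ≤ i ≤ N and 1 ≤ j ≤ T. Then the gradients, taken with respect to the 2(N−1)T interior variables {H_i(t_j) : 2 ≤ i ≤ N, 1 ≤ j ≤ T} ∪ {Q_i(t_j) : 1 ≤ i ≤ N−1, 1 ≤ j ≤ T}, of the 2(N−1)T hydraulic residuals c_{i,j} (2 ≤ i ≤ N, 1 ≤ j ≤ T) and d_{i,j} (1 ≤ i ≤ N−1, 1 ≤ j ≤ T) are linearly independent; equivalently, they form a basis of ℝ^{2(N−1)T}. -/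

import Mathlib

/-- Index type for the interior hydraulic variables of the staggered grid.
`Sum.inl (k, m)` is the interior level variable `H_{k+2}(t_{m+1})` (`2 ≤ k+2 ≤ N`),
`Sum.inr (k, m)` is the interior discharge variable `Q_{k+1}(t_{m+1})` (`1 ≤ k+1 ≤ N-1`). -/
abbrev HydIdx (N T : ℕ) : Type := (Fin (N - 1) × Fin T) ⊕ (Fin (N - 1) × Fin T)

/-- Smooth absolute value `⟨x⟩ = √(x² + ε)`. -/
noncomputable def sabs (ε x : ℝ) : ℝ := Real.sqrt (x ^ 2 + ε)

/-- Value of the level `H_i(t_j)` (`1 ≤ i ≤ N`, `0 ≤ j ≤ T`): the fixed initial value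
`H0 i` at `j = 0`, the fixed boundary value `Hbd j` at `i = 1`, and an interior optimization
variable otherwise. -/
noncomputable def Hval (N T : ℕ) (H0 Hbd : ℕ → ℝ) (x : HydIdx N T → ℝ) (i j : ℕ) : ℝ :=
  if j = 0 then H0 i
  else if i ≤ 1 then Hbd j
  else if h : i - 2 < N - 1 ∧ j - 1 < T then x (Sum.inl (⟨i - 2, h.1⟩, ⟨j - 1, h.2⟩)) else 0

/-- Value of the discharge `Q_i(t_j)` (`1 ≤ i ≤ N`, `0 ≤ j ≤ T`): the fixed initial value
`Q0 i` at `j = 0`, the given boundary value `QN j` at `i = N`, and an interior optimization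
variable otherwise. -/
noncomputable def Qval (N T : ℕ) (Q0 QN : ℕ → ℝ) (x : HydIdx N T → ℝ) (i j : ℕ) : ℝ :=
  if j = 0 then Q0 i
  else if N ≤ i then QN j
  else if h : i - 1 < N - 1 ∧ j - 1 < T then x (Sum.inr (⟨i - 1, h.1⟩, ⟨j - 1, h.2⟩)) else 0

/-- Cross section `A_{i+1/2}(t_j) = (w/2)(H_i(t_j) + H_{i+1}(t_j) - 2 H_b)`. -/
noncomputable def Aval (N T : ℕ) (H0 Hbd : ℕ → ℝ) (w Hb : ℝ)
    (x : HydIdx N T → ℝ) (i j : ℕ) : ℝ :=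
  w / 2 * (Hval N T H0 Hbd x i j + Hval N T H0 Hbd x (i + 1) j - 2 * Hb)

/-- Wetted perimeter `P_{i+1/2}(t_j) = w + H_i(t_j) + H_{i+1}(t_j) - 2 H_b`. -/
noncomputable def Pval (N T : ℕ) (H0 Hbd : ℕ → ℝ) (w Hb : ℝ)
    (x : HydIdx N T → ℝ) (i j : ℕ) : ℝ :=
  w + Hval N T H0 Hbd x i j + Hval N T H0 Hbd x (i + 1) j - 2 * Hb

/-- Mass-balance residual `c_{i,j}` (`2 ≤ i ≤ N`, `1 ≤ j ≤ T`). -/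
noncomputable def massRes (N T : ℕ) (H0 Hbd Q0 QN : ℕ → ℝ) (w Δx Δt : ℝ)
    (x : HydIdx N T → ℝ) (i j : ℕ) : ℝ :=
  (Qval N T Q0 QN x i j - Qval N T Q0 QN x (i - 1) j) / Δx
    + w * (Hval N T H0 Hbd x i j - Hval N T H0 Hbd x i (j - 1)) / Δt

/-- Momentum residual `d_{i,j}` (`1 ≤ i ≤ N-1`, `1 ≤ j ≤ T`). -/
noncomputable def momRes (N T : ℕ) (H0 Hbd Q0 QN : ℕ → ℝ)
    (g w Hb Δx Δt C ε Abar Pbar Qbar θ : ℝ) (x : HydIdx N T → ℝ) (i j : ℕ) : ℝ :=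
  (Qval N T Q0 QN x i j - Qval N T Q0 QN x i (j - 1)) / Δt
    + g * (θ * Aval N T H0 Hbd w Hb x i j + (1 - θ) * Abar)
        * (Hval N T H0 Hbd x (i + 1) j - Hval N T H0 Hbd x i j) / Δx
    + g * (θ * Pval N T H0 Hbd w Hb x i (j - 1) * sabs ε (Qval N T Q0 QN x i j)
            / Aval N T H0 Hbd w Hb x i (j - 1) ^ 2
          + (1 - θ) * Pbar * sabs ε Qbar / Abar ^ 2)
        * Qval N T Q0 QN x i j / C ^ 2

/-- The family of all `2(N-1)T` hydraulic residuals, as functions of the vector of interior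
variables: `Sum.inl (k, m) ↦ c_{k+2, m+1}` and `Sum.inr (k, m) ↦ d_{k+1, m+1}`. -/
noncomputable def hydRes (N T : ℕ) (H0 Hbd Q0 QN : ℕ → ℝ)
    (g w Hb Δx Δt C ε Abar Pbar Qbar θ : ℝ) (r : HydIdx N T) (x : HydIdx N T → ℝ) : ℝ :=
  match r with
  | Sum.inl (k, m) => massRes N T H0 Hbd Q0 QN w Δx Δt x ((k : ℕ) + 2) ((m : ℕ) + 1)
  | Sum.inr (k, m) =>
      momRes N T H0 Hbd Q0 QN g w Hb Δx Δt C ε Abar Pbar Qbar θ x ((k : ℕ) + 1) ((m : ℕ) + 1)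

namespace HydAux

variable {E : Type*} [NormedAddCommGroup E] [NormedSpace ℝ E] {f g : E → ℝ}
  {f' g' : E →L[ℝ] ℝ} {x : E}

theorem hd_div_const (hf : HasFDerivAt f f' x) (c : ℝ) :
    HasFDerivAt (fun y => f y / c) (c⁻¹ • f') x := by
  simpa [div_eq_inv_mul] using hf.const_mul c⁻¹

theorem hd_inv (hf : HasFDerivAt f f' x) (h : f x ≠ 0) :
    HasFDerivAt (fun y => (f y)⁻¹) ((-(f x ^ 2)⁻¹) • f') x :=
  (hasDerivAt_inv h).comp_hasFDerivAt x hf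

theorem hd_div (hf : HasFDerivAt f f' x) (hg : HasFDerivAt g g' x) (h : g x ≠ 0) :
    HasFDerivAt (fun y => f y / g y) ((g x)⁻¹ • f' - (f x / g x ^ 2) • g') x := by
  simp only [div_eq_mul_inv]
  refine (hf.mul (hd_inv hg h)).congr_fderiv ?_
  ext v
  simp only [ContinuousLinearMap.add_apply, ContinuousLinearMap.smul_apply,
    ContinuousLinearMap.sub_apply, smul_eq_mul]
  field_simp
  ring

theorem hd_sq (hf : HasFDerivAt f f' x) :
    HasFDerivAt (fun y => f y ^ 2) ((2 * f x) • f') x := by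
  have := hf.mul hf
  simp only [pow_two]
  refine this.congr_fderiv ?_
  ext v
  simp only [ContinuousLinearMap.add_apply, ContinuousLinearMap.smul_apply, smul_eq_mul]
  ring

theorem hd_sabs (hf : HasFDerivAt f f' x) {ε : ℝ} (hε : 0 < ε) :
    HasFDerivAt (fun y => sabs ε (f y)) ((f x / sabs ε (f x)) • f') x := by
  have h0 : (0:ℝ) < f x ^ 2 + ε := by positivity
  have h := ((hd_sq hf).add_const ε).sqrt h0.ne'
  unfold sabs
  refine h.congr_fderiv ?_
  ext v
  simp only [ContinuousLinearMap.smul_apply, smul_eq_mul]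
  have hs : Real.sqrt (f x ^ 2 + ε) ≠ 0 := by positivity
  field_simp

end HydAux

namespace HydAux2

open ContinuousLinearMap

noncomputable def dHclm (N T : ℕ) (i j : ℕ) : (HydIdx N T → ℝ) →L[ℝ] ℝ :=
  if j = 0 then 0 else if i ≤ 1 then 0
  else if h : i - 2 < N - 1 ∧ j - 1 < T then
    ContinuousLinearMap.proj (Sum.inl (⟨i - 2, h.1⟩, ⟨j - 1, h.2⟩))
  else 0

noncomputable def dQclm (N T : ℕ) (i j : ℕ) : (HydIdx N T → ℝ) →L[ℝ] ℝ :=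
  if j = 0 then 0 else if N ≤ i then 0
  else if h : i - 1 < N - 1 ∧ j - 1 < T then
    ContinuousLinearMap.proj (Sum.inr (⟨i - 1, h.1⟩, ⟨j - 1, h.2⟩))
  else 0

variable {N T : ℕ}

theorem hasFDerivAt_Hval (H0 Hbd : ℕ → ℝ) (x : HydIdx N T → ℝ) (i j : ℕ) :
    HasFDerivAt (fun y => Hval N T H0 Hbd y i j) (dHclm N T i j) x := by
  unfold Hval dHclm
  rcases eq_or_ne j 0 with h1 | h1
  · simp only [h1, if_pos rfl]; exact hasFDerivAt_const _ _
  · simp only [if_neg h1]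
    rcases le_or_gt i 1 with h2 | h2
    · simp only [if_pos h2]; exact hasFDerivAt_const _ _
    · simp only [if_neg (by omega : ¬ i ≤ 1)]
      by_cases h3 : i - 2 < N - 1 ∧ j - 1 < T
      · simp only [dif_pos h3]; exact (ContinuousLinearMap.proj (R := ℝ) (φ := fun _ : HydIdx N T => ℝ) _).hasFDerivAt
      · simp only [dif_neg h3]; exact hasFDerivAt_const _ _

theorem hasFDerivAt_Qval (Q0 QN : ℕ → ℝ) (x : HydIdx N T → ℝ) (i j : ℕ) :
    HasFDerivAt (fun y => Qval N T Q0 QN y i j) (dQclm N T i j) x := by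
  unfold Qval dQclm
  rcases eq_or_ne j 0 with h1 | h1
  · simp only [h1, if_pos rfl]; exact hasFDerivAt_const _ _
  · simp only [if_neg h1]
    rcases le_or_gt N i with h2 | h2
    · simp only [if_pos h2]; exact hasFDerivAt_const _ _
    · simp only [if_neg (by omega : ¬ N ≤ i)]
      by_cases h3 : i - 1 < N - 1 ∧ j - 1 < T
      · simp only [dif_pos h3]; exact (ContinuousLinearMap.proj (R := ℝ) (φ := fun _ : HydIdx N T => ℝ) _).hasFDerivAt
      · simp only [dif_neg h3]; exact hasFDerivAt_const _ _

theorem dHclm_eval {i j : ℕ} (hj : j ≠ 0) (hi : 2 ≤ i) (h1 : i - 2 < N - 1) (h2 : j - 1 < T)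
    (v : HydIdx N T → ℝ) : dHclm N T i j v = v (Sum.inl (⟨i - 2, h1⟩, ⟨j - 1, h2⟩)) := by
  unfold dHclm
  rw [if_neg hj, if_neg (by omega : ¬ i ≤ 1), dif_pos ⟨h1, h2⟩]
  rfl

theorem dQclm_eval {i j : ℕ} (hj : j ≠ 0) (hi : i < N) (h1 : i - 1 < N - 1) (h2 : j - 1 < T)
    (v : HydIdx N T → ℝ) : dQclm N T i j v = v (Sum.inr (⟨i - 1, h1⟩, ⟨j - 1, h2⟩)) := by
  unfold dQclm
  rw [if_neg hj, if_neg (by omega : ¬ N ≤ i), dif_pos ⟨h1, h2⟩]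
  rfl

theorem dHclm_zero {i j : ℕ} (h : j = 0 ∨ i ≤ 1 ∨ ¬(i - 2 < N - 1 ∧ j - 1 < T)) :
    dHclm N T i j = 0 := by
  unfold dHclm
  rcases h with h | h | h
  · rw [if_pos h]
  · rcases eq_or_ne j 0 with h1 | h1
    · rw [if_pos h1]
    · rw [if_neg h1, if_pos h]
  · rcases eq_or_ne j 0 with h1 | h1
    · rw [if_pos h1]
    · rw [if_neg h1]
      rcases le_or_gt i 1 with h2 | h2
      · rw [if_pos h2]
      · rw [if_neg (by omega : ¬ i ≤ 1), dif_neg h]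

theorem dQclm_zero {i j : ℕ} (h : j = 0 ∨ N ≤ i ∨ ¬(i - 1 < N - 1 ∧ j - 1 < T)) :
    dQclm N T i j = 0 := by
  unfold dQclm
  rcases h with h | h | h
  · rw [if_pos h]
  · rcases eq_or_ne j 0 with h1 | h1
    · rw [if_pos h1]
    · rw [if_neg h1, if_pos h]
  · rcases eq_or_ne j 0 with h1 | h1
    · rw [if_pos h1]
    · rw [if_neg h1]
      rcases le_or_gt N i with h2 | h2
      · rw [if_pos h2]
      · rw [if_neg (by omega : ¬ N ≤ i), dif_neg h]

end HydAux2

namespace HydAux2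

noncomputable def Dmass (N T : ℕ) (w Δx Δt : ℝ) (i j : ℕ) : (HydIdx N T → ℝ) →L[ℝ] ℝ :=
  Δx⁻¹ • (dQclm N T i j - dQclm N T (i - 1) j)
    + (w / Δt) • (dHclm N T i j - dHclm N T i (j - 1))

variable {N T : ℕ}

theorem hasFDerivAt_massRes (H0 Hbd Q0 QN : ℕ → ℝ) (w Δx Δt : ℝ)
    (x : HydIdx N T → ℝ) (i j : ℕ) :
    HasFDerivAt (fun y => massRes N T H0 Hbd Q0 QN w Δx Δt y i j)
      (Dmass N T w Δx Δt i j) x := by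
  unfold massRes
  have h1 := hasFDerivAt_Qval (N := N) (T := T) Q0 QN x i j
  have h2 := hasFDerivAt_Qval (N := N) (T := T) Q0 QN x (i - 1) j
  have h3 := hasFDerivAt_Hval (N := N) (T := T) H0 Hbd x i j
  have h4 := hasFDerivAt_Hval (N := N) (T := T) H0 Hbd x i (j - 1)
  have h := (HydAux.hd_div_const (h1.sub h2) Δx).add
    (HydAux.hd_div_const ((h3.sub h4).const_mul w) Δt)
  refine h.congr_fderiv ?_
  unfold Dmass
  ext v
  simp only [ContinuousLinearMap.add_apply, ContinuousLinearMap.smul_apply,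
    ContinuousLinearMap.sub_apply, smul_eq_mul]
  field_simp

end HydAux2

namespace HydAux2

/-- Derivative of the momentum residual. -/
noncomputable def Dmom (N T : ℕ) (H0 Hbd Q0 QN : ℕ → ℝ)
    (g w Hb Δx Δt C ε Abar Pbar Qbar θ : ℝ) (x : HydIdx N T → ℝ) (i j : ℕ) :
    (HydIdx N T → ℝ) →L[ℝ] ℝ :=
  (1 / Δt + g * (θ * Pval N T H0 Hbd w Hb x i (j-1)
        * ((Qval N T Q0 QN x i j) ^ 2 / sabs ε (Qval N T Q0 QN x i j))
        / Aval N T H0 Hbd w Hb x i (j-1) ^ 2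
      + θ * Pval N T H0 Hbd w Hb x i (j-1) * sabs ε (Qval N T Q0 QN x i j)
        / Aval N T H0 Hbd w Hb x i (j-1) ^ 2
      + (1 - θ) * Pbar * sabs ε Qbar / Abar ^ 2) / C ^ 2) • dQclm N T i j
  + (-(1 / Δt)) • dQclm N T i (j-1)
  + (g * θ * (w / 2) * (Hval N T H0 Hbd x (i+1) j - Hval N T H0 Hbd x i j) / Δx
      - g * (θ * Aval N T H0 Hbd w Hb x i j + (1 - θ) * Abar) / Δx) • dHclm N T i j
  + (g * θ * (w / 2) * (Hval N T H0 Hbd x (i+1) j - Hval N T H0 Hbd x i j) / Δx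
      + g * (θ * Aval N T H0 Hbd w Hb x i j + (1 - θ) * Abar) / Δx) • dHclm N T (i+1) j
  + (g * θ * Qval N T Q0 QN x i j * sabs ε (Qval N T Q0 QN x i j)
      * (1 / Aval N T H0 Hbd w Hb x i (j-1) ^ 2
         - Pval N T H0 Hbd w Hb x i (j-1) * w / Aval N T H0 Hbd w Hb x i (j-1) ^ 3) / C ^ 2)
      • (dHclm N T i (j-1) + dHclm N T (i+1) (j-1))

variable {N T : ℕ}

set_option maxHeartbeats 2000000 in
theorem hasFDerivAt_momRes (H0 Hbd Q0 QN : ℕ → ℝ)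
    (g w Hb Δx Δt C ε Abar Pbar Qbar θ : ℝ) (x : HydIdx N T → ℝ) (i j : ℕ)
    (hε : 0 < ε) (hAm : Aval N T H0 Hbd w Hb x i (j-1) ≠ 0)
    (hC : C ≠ 0) (hΔx : Δx ≠ 0) (hΔt : Δt ≠ 0) (hAbar : Abar ≠ 0) :
    HasFDerivAt (fun y => momRes N T H0 Hbd Q0 QN g w Hb Δx Δt C ε Abar Pbar Qbar θ y i j)
      (Dmom N T H0 Hbd Q0 QN g w Hb Δx Δt C ε Abar Pbar Qbar θ x i j) x := by
  have hQ1 := hasFDerivAt_Qval (N := N) (T := T) Q0 QN x i j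
  have hQ0 := hasFDerivAt_Qval (N := N) (T := T) Q0 QN x i (j-1)
  have hH1 := hasFDerivAt_Hval (N := N) (T := T) H0 Hbd x i j
  have hH2 := hasFDerivAt_Hval (N := N) (T := T) H0 Hbd x (i+1) j
  have hH1m := hasFDerivAt_Hval (N := N) (T := T) H0 Hbd x i (j-1)
  have hH2m := hasFDerivAt_Hval (N := N) (T := T) H0 Hbd x (i+1) (j-1)
  have hA : HasFDerivAt (fun y => Aval N T H0 Hbd w Hb y i j)
      ((w/2) • (dHclm N T i j + dHclm N T (i+1) j)) x := by
    unfold Aval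
    exact ((hH1.add hH2).sub_const (2 * Hb)).const_mul (w/2)
  have hAm' : HasFDerivAt (fun y => Aval N T H0 Hbd w Hb y i (j-1))
      ((w/2) • (dHclm N T i (j-1) + dHclm N T (i+1) (j-1))) x := by
    unfold Aval
    exact ((hH1m.add hH2m).sub_const (2 * Hb)).const_mul (w/2)
  have hPm : HasFDerivAt (fun y => Pval N T H0 Hbd w Hb y i (j-1))
      (dHclm N T i (j-1) + dHclm N T (i+1) (j-1)) x := by
    unfold Pval
    have := ((hH1m.const_add w).add hH2m).sub_const (2 * Hb)
    simpa using this
  have hS : HasFDerivAt (fun y => sabs ε (Qval N T Q0 QN y i j))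
      ((Qval N T Q0 QN x i j / sabs ε (Qval N T Q0 QN x i j)) • dQclm N T i j) x :=
    HydAux.hd_sabs hQ1 hε
  have hA2 : HasFDerivAt (fun y => Aval N T H0 Hbd w Hb y i (j-1) ^ 2)
      ((2 * Aval N T H0 Hbd w Hb x i (j-1)) • ((w/2) • (dHclm N T i (j-1) + dHclm N T (i+1) (j-1)))) x :=
    HydAux.hd_sq hAm'
  have hA2ne : Aval N T H0 Hbd w Hb x i (j-1) ^ 2 ≠ 0 := pow_ne_zero _ hAm
  -- term 1
  have t1 := HydAux.hd_div_const (hQ1.sub hQ0) Δt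
  -- term 2
  have t2a := ((hA.const_mul θ).add_const ((1 - θ) * Abar)).const_mul g
  have t2 := HydAux.hd_div_const (t2a.mul (hH2.sub hH1)) Δx
  -- term 3
  have t3a := (hPm.const_mul θ).mul hS
  have t3b := HydAux.hd_div t3a hA2 hA2ne
  have t3c := t3b.add_const ((1 - θ) * Pbar * sabs ε Qbar / Abar ^ 2)
  have t3 := HydAux.hd_div_const ((t3c.const_mul g).mul hQ1) (C ^ 2)
  have h := (t1.add t2).add t3
  unfold momRes
  refine h.congr_fderiv ?_
  unfold Dmom
  ext v
  have hs : sabs ε (Qval N T Q0 QN x i j) ≠ 0 := by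
    unfold sabs; positivity
  simp only [ContinuousLinearMap.add_apply, ContinuousLinearMap.smul_apply,
    ContinuousLinearMap.sub_apply, ContinuousLinearMap.neg_apply, smul_eq_mul,
    Pi.sub_apply, Pi.mul_apply]
  field_simp [hAm, hs, hC, hΔx, hΔt, hAbar]
  ring

end HydAux2

theorem tridiag_zero (n : ℕ) (hn : 1 ≤ n) (B c e u : ℕ → ℝ)
    (hBce : ∀ i, 1 ≤ i → i ≤ n → c i + e i < B i)
    (hc : ∀ i, 1 ≤ i → i ≤ n → 0 ≤ c i)
    (he : ∀ i, 1 ≤ i → i ≤ n → 0 ≤ e i)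
    (he1 : e 1 = 0)
    (hun : u (n + 1) = 0)
    (heq : ∀ i, 1 ≤ i → i ≤ n → B i * u i = c i * u (i + 1) + e i * u (i - 1)) :
    ∀ i, 1 ≤ i → i ≤ n → u i = 0 := by
  obtain ⟨i0, hi0, hmax⟩ := Finset.exists_max_image (Finset.Icc 1 n) (fun i => |u i|)
    ⟨1, by simp [hn]⟩
  simp only [Finset.mem_Icc] at hi0
  have hmax' : ∀ i, 1 ≤ i → i ≤ n → |u i| ≤ |u i0| := by
    intro i h1 h2
    exact hmax i (Finset.mem_Icc.2 ⟨h1, h2⟩)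
  have hM0 : |u i0| = 0 := by
    by_contra hM
    have hMpos : 0 < |u i0| := lt_of_le_of_ne (abs_nonneg _) (Ne.symm hM)
    have h1 := heq i0 hi0.1 hi0.2
    have hup : |u (i0 + 1)| ≤ |u i0| := by
      rcases eq_or_lt_of_le hi0.2 with h | h
      · rw [h, hun]; simp
      · exact hmax' _ (by omega) (by omega)
    have hdown : e i0 * |u (i0 - 1)| ≤ e i0 * |u i0| := by
      rcases eq_or_lt_of_le hi0.1 with h | h
      · rw [← h, he1]; simp
      · exact mul_le_mul_of_nonneg_left (hmax' _ (by omega) (by omega)) (he _ hi0.1 hi0.2)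
    have hB : B i0 * |u i0| = |c i0 * u (i0 + 1) + e i0 * u (i0 - 1)| := by
      rw [← abs_of_pos (lt_of_le_of_lt (add_nonneg (hc _ hi0.1 hi0.2) (he _ hi0.1 hi0.2))
        (hBce _ hi0.1 hi0.2)), ← abs_mul, h1]
    have hle : B i0 * |u i0| ≤ (c i0 + e i0) * |u i0| := by
      rw [hB]
      calc |c i0 * u (i0 + 1) + e i0 * u (i0 - 1)|
          ≤ |c i0 * u (i0 + 1)| + |e i0 * u (i0 - 1)| := abs_add_le _ _
        _ = c i0 * |u (i0 + 1)| + e i0 * |u (i0 - 1)| := by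
            rw [abs_mul, abs_mul, abs_of_nonneg (hc _ hi0.1 hi0.2),
              abs_of_nonneg (he _ hi0.1 hi0.2)]
        _ ≤ c i0 * |u i0| + e i0 * |u i0| := by
            gcongr
            exact hc _ hi0.1 hi0.2
        _ = (c i0 + e i0) * |u i0| := by ring
    have := mul_lt_mul_of_pos_right (hBce _ hi0.1 hi0.2) hMpos
    linarith
  intro i h1 h2
  have := hmax' i h1 h2
  rw [hM0] at this
  exact abs_eq_zero.1 (le_antisymm this (abs_nonneg _))

namespace HydAux2

theorem Dmass_apply {N T : ℕ} (w Δx Δt : ℝ) (i j : ℕ) (v : HydIdx N T → ℝ) :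
    Dmass N T w Δx Δt i j v =
      Δx⁻¹ * (dQclm N T i j v - dQclm N T (i - 1) j v)
        + (w / Δt) * (dHclm N T i j v - dHclm N T i (j - 1) v) := by
  unfold Dmass
  simp [ContinuousLinearMap.add_apply, ContinuousLinearMap.smul_apply,
    ContinuousLinearMap.sub_apply, smul_eq_mul]

theorem Dmom_apply {N T : ℕ} (H0 Hbd Q0 QN : ℕ → ℝ)
    (g w Hb Δx Δt C ε Abar Pbar Qbar θ : ℝ) (x : HydIdx N T → ℝ) (i j : ℕ)
    (v : HydIdx N T → ℝ) :
    Dmom N T H0 Hbd Q0 QN g w Hb Δx Δt C ε Abar Pbar Qbar θ x i j v =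
      (1 / Δt + g * (θ * Pval N T H0 Hbd w Hb x i (j-1)
            * ((Qval N T Q0 QN x i j) ^ 2 / sabs ε (Qval N T Q0 QN x i j))
            / Aval N T H0 Hbd w Hb x i (j-1) ^ 2
          + θ * Pval N T H0 Hbd w Hb x i (j-1) * sabs ε (Qval N T Q0 QN x i j)
            / Aval N T H0 Hbd w Hb x i (j-1) ^ 2
          + (1 - θ) * Pbar * sabs ε Qbar / Abar ^ 2) / C ^ 2) * dQclm N T i j v
      + (-(1 / Δt)) * dQclm N T i (j-1) v
      + (g * θ * (w / 2) * (Hval N T H0 Hbd x (i+1) j - Hval N T H0 Hbd x i j) / Δx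
          - g * (θ * Aval N T H0 Hbd w Hb x i j + (1 - θ) * Abar) / Δx) * dHclm N T i j v
      + (g * θ * (w / 2) * (Hval N T H0 Hbd x (i+1) j - Hval N T H0 Hbd x i j) / Δx
          + g * (θ * Aval N T H0 Hbd w Hb x i j + (1 - θ) * Abar) / Δx) * dHclm N T (i+1) j v
      + (g * θ * Qval N T Q0 QN x i j * sabs ε (Qval N T Q0 QN x i j)
          * (1 / Aval N T H0 Hbd w Hb x i (j-1) ^ 2
             - Pval N T H0 Hbd w Hb x i (j-1) * w / Aval N T H0 Hbd w Hb x i (j-1) ^ 3) / C ^ 2)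
          * (dHclm N T i (j-1) v + dHclm N T (i+1) (j-1) v) := by
  unfold Dmom
  simp [ContinuousLinearMap.add_apply, ContinuousLinearMap.smul_apply,
    ContinuousLinearMap.sub_apply, ContinuousLinearMap.neg_apply, smul_eq_mul]
  ring

theorem Hval_gt {N T : ℕ} (H0 Hbd : ℕ → ℝ) (Hb : ℝ) (x : HydIdx N T → ℝ)
    (hH0 : ∀ i, 1 ≤ i → i ≤ N → Hb < H0 i)
    (hHbd : ∀ j, 1 ≤ j → j ≤ T → Hb < Hbd j)
    (hx : ∀ p : Fin (N - 1) × Fin T, Hb < x (Sum.inl p))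
    (i j : ℕ) (hi1 : 1 ≤ i) (hi2 : i ≤ N) (hj : j ≤ T) :
    Hb < Hval N T H0 Hbd x i j := by
  unfold Hval
  rcases eq_or_ne j 0 with h1 | h1
  · rw [if_pos h1]; exact hH0 i hi1 hi2
  · rw [if_neg h1]
    rcases le_or_gt i 1 with h2 | h2
    · rw [if_pos h2]; exact hHbd j (by omega) hj
    · rw [if_neg (by omega : ¬ i ≤ 1), dif_pos (by omega : i - 2 < N - 1 ∧ j - 1 < T)]
      exact hx _

end HydAux2

namespace HydAux2

noncomputable def gamF (N T : ℕ) (H0 Hbd Q0 QN : ℕ → ℝ)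
    (g w Hb Δt C ε Abar Pbar Qbar θ : ℝ) (x : HydIdx N T → ℝ) (m i : ℕ) : ℝ :=
  1 / Δt + g * (θ * Pval N T H0 Hbd w Hb x i m
        * ((Qval N T Q0 QN x i (m+1)) ^ 2 / sabs ε (Qval N T Q0 QN x i (m+1)))
        / Aval N T H0 Hbd w Hb x i m ^ 2
      + θ * Pval N T H0 Hbd w Hb x i m * sabs ε (Qval N T Q0 QN x i (m+1))
        / Aval N T H0 Hbd w Hb x i m ^ 2
      + (1 - θ) * Pbar * sabs ε Qbar / Abar ^ 2) / C ^ 2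

noncomputable def cHloF (N T : ℕ) (H0 Hbd : ℕ → ℝ)
    (g w Hb Δx Abar θ : ℝ) (x : HydIdx N T → ℝ) (m i : ℕ) : ℝ :=
  g * θ * (w / 2) * (Hval N T H0 Hbd x (i+1) (m+1) - Hval N T H0 Hbd x i (m+1)) / Δx
    - g * (θ * Aval N T H0 Hbd w Hb x i (m+1) + (1 - θ) * Abar) / Δx

noncomputable def cHhiF (N T : ℕ) (H0 Hbd : ℕ → ℝ)
    (g w Hb Δx Abar θ : ℝ) (x : HydIdx N T → ℝ) (m i : ℕ) : ℝ :=
  g * θ * (w / 2) * (Hval N T H0 Hbd x (i+1) (m+1) - Hval N T H0 Hbd x i (m+1)) / Δx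
    + g * (θ * Aval N T H0 Hbd w Hb x i (m+1) + (1 - θ) * Abar) / Δx

theorem key_inj (N T : ℕ) (hN : 2 ≤ N) (hT : 1 ≤ T)
    (g w Δx Δt C ε Abar Pbar : ℝ)
    (hg : 0 < g) (hw : 0 < w) (hΔx : 0 < Δx) (hΔt : 0 < Δt) (hC : 0 < C)
    (hε : 0 < ε) (hAbar : 0 < Abar) (hPbar : 0 < Pbar)
    (Hb Qbar θ : ℝ) (hθ : 0 ≤ θ) (hθ1 : θ ≤ 1)
    (H0 Hbd Q0 QN : ℕ → ℝ)
    (hH0 : ∀ i, 1 ≤ i → i ≤ N → Hb < H0 i)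
    (hHbd : ∀ j, 1 ≤ j → j ≤ T → Hb < Hbd j)
    (x : HydIdx N T → ℝ)
    (hx : ∀ p : Fin (N - 1) × Fin T, Hb < x (Sum.inl p))
    (u : HydIdx N T → ℝ)
    (humass : ∀ (k : Fin (N-1)) (m : Fin T),
      Dmass N T w Δx Δt ((k : ℕ) + 2) ((m : ℕ) + 1) u = 0)
    (humom : ∀ (k : Fin (N-1)) (m : Fin T),
      Dmom N T H0 Hbd Q0 QN g w Hb Δx Δt C ε Abar Pbar Qbar θ x ((k : ℕ) + 1) ((m : ℕ) + 1) u = 0) :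
    u = 0 := by
  have hHgt := Hval_gt (N := N) (T := T) H0 Hbd Hb x hH0 hHbd hx
  have hmain : ∀ m : ℕ, ∀ hm : m < T, ∀ k : Fin (N-1),
      u (Sum.inl (k, ⟨m, hm⟩)) = 0 ∧ u (Sum.inr (k, ⟨m, hm⟩)) = 0 := by
    intro m
    induction m using Nat.strong_induction_on with
    | _ m IH =>
    intro hm
    have Z1 : ∀ i j', j' ≤ m → dHclm N T i j' u = 0 := by
      intro i j' hj'
      rcases eq_or_ne j' 0 with h0 | h0
      · rw [dHclm_zero (Or.inl h0)]; rfl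
      rcases le_or_gt i 1 with h1 | h1
      · rw [dHclm_zero (Or.inr (Or.inl h1))]; rfl
      by_cases h2 : i - 2 < N - 1 ∧ j' - 1 < T
      · rw [dHclm_eval h0 (by omega) h2.1 h2.2]
        exact (IH (j'-1) (by omega) (by omega) ⟨i-2, h2.1⟩).1
      · rw [dHclm_zero (Or.inr (Or.inr h2))]; rfl
    have Z2 : ∀ i j', j' ≤ m → dQclm N T i j' u = 0 := by
      intro i j' hj'
      rcases eq_or_ne j' 0 with h0 | h0
      · rw [dQclm_zero (Or.inl h0)]; rfl
      rcases le_or_gt N i with h1 | h1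
      · rw [dQclm_zero (Or.inr (Or.inl h1))]; rfl
      by_cases h2 : i - 1 < N - 1 ∧ j' - 1 < T
      · rw [dQclm_eval h0 h1 h2.1 h2.2]
        exact (IH (j'-1) (by omega) (by omega) ⟨i-1, h2.1⟩).2
      · rw [dQclm_zero (Or.inr (Or.inr h2))]; rfl
    have hQqN : ∀ i, N ≤ i → dQclm N T i (m+1) u = 0 := by
      intro i hi; rw [dQclm_zero (Or.inr (Or.inl hi))]; rfl
    have hmT : m + 1 ≤ T := hm
    -- mass equations, denominator-free
    have hmassEq : ∀ i, 2 ≤ i → i ≤ N →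
        Δt * (dQclm N T i (m+1) u - dQclm N T (i-1) (m+1) u)
          + w * Δx * dHclm N T i (m+1) u = 0 := by
      intro i h2 h3
      have h := humass ⟨i-2, by omega⟩ ⟨m, hm⟩
      rw [Dmass_apply] at h
      simp only [Fin.val_mk] at h
      rw [show i - 2 + 2 = i from by omega, Nat.add_sub_cancel, Z1 i m le_rfl] at h
      have h' := congrArg (fun z => (Δx * Δt) * z) h
      simp only [mul_zero] at h'
      have hid : ∀ A B : ℝ, (Δx * Δt) * (Δx⁻¹ * A + (w / Δt) * (B - 0))
          = Δt * A + w * Δx * B := by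
        intro A B; field_simp; ring
      rw [hid] at h'
      exact h'
    -- momentum equations
    have hmomEq : ∀ i, 1 ≤ i → i ≤ N - 1 →
        gamF N T H0 Hbd Q0 QN g w Hb Δt C ε Abar Pbar Qbar θ x m i * dQclm N T i (m+1) u
          + cHloF N T H0 Hbd g w Hb Δx Abar θ x m i * dHclm N T i (m+1) u
          + cHhiF N T H0 Hbd g w Hb Δx Abar θ x m i * dHclm N T (i+1) (m+1) u = 0 := by
      intro i h1 h2
      have h := humom ⟨i-1, by omega⟩ ⟨m, hm⟩
      rw [Dmom_apply] at h
      simp only [Fin.val_mk] at h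
      rw [show i - 1 + 1 = i from by omega, Nat.add_sub_cancel] at h
      rw [Z1 i m le_rfl, Z1 (i+1) m le_rfl, Z2 i m le_rfl] at h
      unfold gamF cHloF cHhiF
      linear_combination h
    -- positivity of coefficients
    have hSpos : ∀ q : ℝ, 0 < sabs ε q := by
      intro q; unfold sabs; positivity
    have hPpos : ∀ i, 1 ≤ i → i ≤ N - 1 → 0 < Pval N T H0 Hbd w Hb x i m := by
      intro i h1 h2
      have ha := hHgt i m h1 (by omega) (by omega)
      have hb := hHgt (i+1) m (by omega) (by omega) (by omega)
      unfold Pval; linarith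
    have hApos : ∀ i, 1 ≤ i → i ≤ N - 1 → 0 < Aval N T H0 Hbd w Hb x i m := by
      intro i h1 h2
      have ha := hHgt i m h1 (by omega) (by omega)
      have hb := hHgt (i+1) m (by omega) (by omega) (by omega)
      unfold Aval; nlinarith
    have hgam : ∀ i, 1 ≤ i → i ≤ N - 1 →
        0 < gamF N T H0 Hbd Q0 QN g w Hb Δt C ε Abar Pbar Qbar θ x m i := by
      intro i h1 h2
      have hP := hPpos i h1 h2
      have hA := hApos i h1 h2
      have hS := hSpos (Qval N T Q0 QN x i (m+1))
      have hSb := hSpos Qbar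
      unfold gamF
      have e1 : 0 ≤ θ * Pval N T H0 Hbd w Hb x i m
          * ((Qval N T Q0 QN x i (m+1)) ^ 2 / sabs ε (Qval N T Q0 QN x i (m+1)))
          / Aval N T H0 Hbd w Hb x i m ^ 2 := by positivity
      have e2 : 0 ≤ θ * Pval N T H0 Hbd w Hb x i m * sabs ε (Qval N T Q0 QN x i (m+1))
          / Aval N T H0 Hbd w Hb x i m ^ 2 := by positivity
      have e3 : 0 ≤ (1 - θ) * Pbar * sabs ε Qbar / Abar ^ 2 := by
        have : 0 ≤ 1 - θ := by linarith
        positivity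
      have e4 : 0 < 1 / Δt := by positivity
      have e5 : 0 ≤ g * (θ * Pval N T H0 Hbd w Hb x i m
          * ((Qval N T Q0 QN x i (m+1)) ^ 2 / sabs ε (Qval N T Q0 QN x i (m+1)))
          / Aval N T H0 Hbd w Hb x i m ^ 2
          + θ * Pval N T H0 Hbd w Hb x i m * sabs ε (Qval N T Q0 QN x i (m+1))
          / Aval N T H0 Hbd w Hb x i m ^ 2
          + (1 - θ) * Pbar * sabs ε Qbar / Abar ^ 2) / C ^ 2 := by
        apply div_nonneg _ (by positivity)
        apply mul_nonneg hg.le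
        linarith
      linarith
    have hcHhi : ∀ i, 1 ≤ i → i ≤ N - 1 →
        0 ≤ cHhiF N T H0 Hbd g w Hb Δx Abar θ x m i := by
      intro i h1 h2
      have hb := hHgt (i+1) (m+1) (by omega) (by omega) hmT
      have key : cHhiF N T H0 Hbd g w Hb Δx Abar θ x m i
          = g * (θ * w * (Hval N T H0 Hbd x (i+1) (m+1) - Hb) + (1 - θ) * Abar) / Δx := by
        unfold cHhiF Aval; ring
      rw [key]
      have h3 : 0 ≤ θ * w * (Hval N T H0 Hbd x (i+1) (m+1) - Hb) := by
        apply mul_nonneg (mul_nonneg hθ hw.le); linarith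
      have h4 : 0 ≤ (1 - θ) * Abar := mul_nonneg (by linarith) hAbar.le
      apply div_nonneg _ hΔx.le
      apply mul_nonneg hg.le
      linarith
    have hcHlo : ∀ i, 1 ≤ i → i ≤ N - 1 →
        cHloF N T H0 Hbd g w Hb Δx Abar θ x m i ≤ 0 := by
      intro i h1 h2
      have hb := hHgt i (m+1) h1 (by omega) hmT
      have key : cHloF N T H0 Hbd g w Hb Δx Abar θ x m i
          = -(g * (θ * w * (Hval N T H0 Hbd x i (m+1) - Hb) + (1 - θ) * Abar) / Δx) := by
        unfold cHloF Aval; ring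
      rw [key]
      have h3 : 0 ≤ θ * w * (Hval N T H0 Hbd x i (m+1) - Hb) := by
        apply mul_nonneg (mul_nonneg hθ hw.le); linarith
      have h4 : 0 ≤ (1 - θ) * Abar := mul_nonneg (by linarith) hAbar.le
      have : 0 ≤ g * (θ * w * (Hval N T H0 Hbd x i (m+1) - Hb) + (1 - θ) * Abar) / Δx := by
        apply div_nonneg _ hΔx.le
        apply mul_nonneg hg.le
        linarith
      linarith
    -- tridiagonal system for the discharge directional values
    set Bf : ℕ → ℝ := fun i =>
      w * Δx * gamF N T H0 Hbd Q0 QN g w Hb Δt C ε Abar Pbar Qbar θ x m i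
        + Δt * cHhiF N T H0 Hbd g w Hb Δx Abar θ x m i
        + (if i = 1 then 0 else Δt * (-(cHloF N T H0 Hbd g w Hb Δx Abar θ x m i))) with hBf
    set cf : ℕ → ℝ := fun i => Δt * cHhiF N T H0 Hbd g w Hb Δx Abar θ x m i with hcf
    set ef : ℕ → ℝ := fun i =>
      if i = 1 then 0 else Δt * (-(cHloF N T H0 Hbd g w Hb Δx Abar θ x m i)) with hef
    have hQzero : ∀ i, 1 ≤ i → i ≤ N - 1 → dQclm N T i (m+1) u = 0 := by
      apply tridiag_zero (N-1) (by omega) Bf cf ef (fun i => dQclm N T i (m+1) u)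
      · intro i h1 h2
        have := hgam i h1 h2
        simp only [hBf, hcf, hef]
        have hpos : 0 < w * Δx * gamF N T H0 Hbd Q0 QN g w Hb Δt C ε Abar Pbar Qbar θ x m i := by
          apply mul_pos (mul_pos hw hΔx) this
        rcases eq_or_ne i 1 with h | h
        · subst h; simp only [eq_self_iff_true, if_true]; linarith
        · simp only [if_neg h]; linarith
      · intro i h1 h2
        simp only [hcf]
        exact mul_nonneg hΔt.le (hcHhi i h1 h2)
      · intro i h1 h2
        simp only [hef]
        rcases eq_or_ne i 1 with h | h
        · simp [h]
        · simp only [if_neg h]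
          have := hcHlo i h1 h2
          apply mul_nonneg hΔt.le; linarith
      · simp only [hef, if_pos rfl]
      · show dQclm N T (N - 1 + 1) (m+1) u = 0
        rw [show N - 1 + 1 = N from by omega]
        exact hQqN N le_rfl
      · intro i h1 h2
        have hmi := hmomEq i h1 h2
        have hHq1 : dHclm N T 1 (m+1) u = 0 := by
          rw [dHclm_zero (Or.inr (Or.inl le_rfl))]; rfl
        have hmsip := hmassEq (i+1) (by omega) (by omega)
        rw [show i + 1 - 1 = i from by omega] at hmsip
        simp only [hBf, hcf, hef]
        rcases eq_or_ne i 1 with h | h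
        · subst h
          simp only [eq_self_iff_true, if_true]
          rw [hHq1] at hmi
          linear_combination (w * Δx) * hmi
            - cHhiF N T H0 Hbd g w Hb Δx Abar θ x m 1 * hmsip
        · simp only [if_neg h]
          have hmsi := hmassEq i (by omega) (by omega)
          linear_combination (w * Δx) * hmi
            - cHhiF N T H0 Hbd g w Hb Δx Abar θ x m i * hmsip
            - cHloF N T H0 Hbd g w Hb Δx Abar θ x m i * hmsi
    -- levels vanish as well
    have hHzero : ∀ i, 2 ≤ i → i ≤ N → dHclm N T i (m+1) u = 0 := by
      intro i h2 h3
      have hms := hmassEq i h2 h3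
      have q1 : dQclm N T i (m+1) u = 0 := by
        rcases eq_or_lt_of_le h3 with h | h
        · rw [h]; exact hQqN N le_rfl
        · exact hQzero i (by omega) (by omega)
      have q2 : dQclm N T (i-1) (m+1) u = 0 := hQzero (i-1) (by omega) (by omega)
      rw [q1, q2] at hms
      have hwx : w * Δx ≠ 0 := by positivity
      have : w * Δx * dHclm N T i (m+1) u = 0 := by linarith
      exact (mul_eq_zero.1 this).resolve_left hwx
    intro k
    constructor
    · have := hHzero ((k : ℕ) + 2) (by omega) (by omega)
      rw [dHclm_eval (by omega) (by omega) (by omega : (k : ℕ) + 2 - 2 < N - 1)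
        (by omega : m + 1 - 1 < T)] at this
      convert this using 4 <;> exact Fin.ext (by simp only [Fin.val_mk]; omega)
    · have := hQzero ((k : ℕ) + 1) (by omega) (by omega)
      rw [dQclm_eval (by omega) (by omega) (by omega : (k : ℕ) + 1 - 1 < N - 1)
        (by omega : m + 1 - 1 < T)] at this
      convert this using 4 <;> exact Fin.ext (by simp only [Fin.val_mk]; omega)
  funext r
  rcases r with ⟨k, mm⟩ | ⟨k, mm⟩
  · have := (hmain mm.1 mm.2 k).1
    simpa using this
  · have := (hmain mm.1 mm.2 k).2
    simpa using this

end HydAux2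

namespace HydAux2

theorem clm_apply_sum {ι : Type*} [Fintype ι] [DecidableEq ι]
    (L : (ι → ℝ) →L[ℝ] ℝ) (v : ι → ℝ) :
    L v = ∑ s, v s * L (Pi.single s 1) := by
  have hv : v = ∑ s, v s • (Pi.single s 1 : ι → ℝ) := by
    funext t
    simp [Finset.sum_apply, Pi.single_apply, Finset.sum_ite_eq, mul_comm]
  conv_lhs => rw [hv]
  rw [map_sum]
  simp [mul_comm]

theorem hydRes_key
    (N T : ℕ) (hN : 2 ≤ N) (hT : 1 ≤ T)
    (g w Δx Δt C ε Abar Pbar : ℝ)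
    (hg : 0 < g) (hw : 0 < w) (hΔx : 0 < Δx) (hΔt : 0 < Δt) (hC : 0 < C)
    (hε : 0 < ε) (hAbar : 0 < Abar) (hPbar : 0 < Pbar)
    (Hb Qbar θ : ℝ) (hθ : θ ∈ Set.Icc (0 : ℝ) 1)
    (H0 Hbd Q0 QN : ℕ → ℝ)
    (hH0 : ∀ i, 1 ≤ i → i ≤ N → Hb < H0 i)
    (hHbd : ∀ j, 1 ≤ j → j ≤ T → Hb < Hbd j)
    (x : HydIdx N T → ℝ)
    (hx : ∀ p : Fin (N - 1) × Fin T, Hb < x (Sum.inl p)) :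
    LinearIndependent ℝ
        (fun r : HydIdx N T =>
          fderiv ℝ (hydRes N T H0 Hbd Q0 QN g w Hb Δx Δt C ε Abar Pbar Qbar θ r) x)
    ∧ Submodule.span ℝ
        (Set.range fun r : HydIdx N T =>
          fderiv ℝ (hydRes N T H0 Hbd Q0 QN g w Hb Δx Δt C ε Abar Pbar Qbar θ r) x) = ⊤ := by
  obtain ⟨hθ0, hθ1⟩ := hθ
  have hHgt := Hval_gt (N := N) (T := T) H0 Hbd Hb x hH0 hHbd hx
  have hApos : ∀ i m', 1 ≤ i → i ≤ N - 1 → m' ≤ T → 0 < Aval N T H0 Hbd w Hb x i m' := by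
    intro i m' h1 h2 h3
    have ha := hHgt i m' h1 (by omega) h3
    have hb := hHgt (i+1) m' (by omega) (by omega) h3
    unfold Aval; nlinarith
  -- the derivatives
  set Dres : HydIdx N T → ((HydIdx N T → ℝ) →L[ℝ] ℝ) := fun r =>
    match r with
    | Sum.inl (k, m) => Dmass N T w Δx Δt ((k : ℕ) + 2) ((m : ℕ) + 1)
    | Sum.inr (k, m) =>
        Dmom N T H0 Hbd Q0 QN g w Hb Δx Δt C ε Abar Pbar Qbar θ x ((k : ℕ) + 1) ((m : ℕ) + 1)
    with hDres
  have hder : ∀ r, HasFDerivAt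
      (hydRes N T H0 Hbd Q0 QN g w Hb Δx Δt C ε Abar Pbar Qbar θ r) (Dres r) x := by
    intro r
    rcases r with ⟨k, m⟩ | ⟨k, m⟩
    · exact hasFDerivAt_massRes H0 Hbd Q0 QN w Δx Δt x ((k : ℕ) + 2) ((m : ℕ) + 1)
    · refine hasFDerivAt_momRes H0 Hbd Q0 QN g w Hb Δx Δt C ε Abar Pbar Qbar θ x
        ((k : ℕ) + 1) ((m : ℕ) + 1) hε ?_ hC.ne' hΔx.ne' hΔt.ne' hAbar.ne'
      rw [Nat.add_sub_cancel]
      exact (hApos ((k : ℕ) + 1) (m : ℕ) (by omega) (by omega) (by omega)).ne'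
  have hfder : ∀ r, fderiv ℝ (hydRes N T H0 Hbd Q0 QN g w Hb Δx Δt C ε Abar Pbar Qbar θ r) x
      = Dres r := fun r => (hder r).fderiv
  -- the Jacobian matrix
  set M : Matrix (HydIdx N T) (HydIdx N T) ℝ :=
    Matrix.of fun r s => (Dres r) (Pi.single s 1) with hM
  have hDv : ∀ (v : HydIdx N T → ℝ) r, Dres r v = M.mulVec v r := by
    intro v r
    rw [clm_apply_sum]
    simp [Matrix.mulVec, dotProduct, hM, Fintype.sum_sum_type, mul_comm]
  have hzero : ∀ v, M.mulVec v = 0 → v = 0 := by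
    intro v hv
    refine key_inj N T hN hT g w Δx Δt C ε Abar Pbar hg hw hΔx hΔt hC hε hAbar hPbar
      Hb Qbar θ hθ0 hθ1 H0 Hbd Q0 QN hH0 hHbd x hx v ?_ ?_
    · intro k m
      have h := hDv v (Sum.inl (k, m))
      rw [hv] at h
      simpa [hDres] using h
    · intro k m
      have h := hDv v (Sum.inr (k, m))
      rw [hv] at h
      simpa [hDres] using h
  have hinj : Function.Injective M.mulVec := by
    have h1 : Function.Injective M.mulVecLin := by
      rw [← LinearMap.ker_eq_bot, LinearMap.ker_eq_bot']
      intro v hv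
      exact hzero v hv
    simpa [Matrix.coe_mulVecLin] using h1
  have hunit : IsUnit M := Matrix.mulVec_injective_iff_isUnit.1 hinj
  have hrows : LinearIndependent ℝ (fun r => M r) :=
    Matrix.linearIndependent_rows_iff_isUnit.2 hunit
  -- evaluation linear map
  set ψ : ((HydIdx N T → ℝ) →L[ℝ] ℝ) →ₗ[ℝ] (HydIdx N T → ℝ) :=
    { toFun := fun L => fun s => L (Pi.single s 1)
      map_add' := by intro a b; funext s; simp
      map_smul' := by intro c a; funext s; simp } with hψ
  have hcomp : (⇑ψ ∘ fun r : HydIdx N T =>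
      fderiv ℝ (hydRes N T H0 Hbd Q0 QN g w Hb Δx Δt C ε Abar Pbar Qbar θ r) x)
      = fun r => M r := by
    funext r s
    simp only [Function.comp_apply, hψ, LinearMap.coe_mk, AddHom.coe_mk, hfder, hM, Matrix.of_apply]
  have hind : LinearIndependent ℝ
      (fun r : HydIdx N T =>
        fderiv ℝ (hydRes N T H0 Hbd Q0 QN g w Hb Δx Δt C ε Abar Pbar Qbar θ r) x) := by
    apply LinearIndependent.of_comp ψ
    rw [hcomp]
    exact hrows
  refine ⟨hind, ?_⟩
  haveI : Nonempty (HydIdx N T) :=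
    ⟨Sum.inl (⟨0, by omega⟩, ⟨0, by omega⟩)⟩
  apply hind.span_eq_top_of_card_eq_finrank
  have h1 : Module.finrank ℝ ((HydIdx N T → ℝ) →L[ℝ] ℝ)
      = Module.finrank ℝ ((HydIdx N T → ℝ) →ₗ[ℝ] ℝ) :=
    (LinearMap.toContinuousLinearMap.finrank_eq).symm
  rw [h1, Module.finrank_linearMap, Module.finrank_fintype_fun_eq_card, Module.finrank_self,
    mul_one]

end HydAux2


/-- If all fixed level values (initial levels `H_i(t_0)`, `1 ≤ i ≤ N`, and boundary levels
`H_1(t_j)`, `1 ≤ j ≤ T`) exceed `H_b`, and the interior level variables satisfy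
`H_i(t_j) > H_b`, then the gradients (with respect to the `2(N-1)T` interior variables) of the
`2(N-1)T` hydraulic residuals `c_{i,j}` and `d_{i,j}` are linearly independent; equivalently,
they form a basis of the (dual of the) `2(N-1)T`-dimensional variable space. -/
theorem hydRes_gradients_linearIndependent
    (N T : ℕ) (hN : 2 ≤ N) (hT : 1 ≤ T)
    (g w Δx Δt C ε Abar Pbar : ℝ)
    (hg : 0 < g) (hw : 0 < w) (hΔx : 0 < Δx) (hΔt : 0 < Δt) (hC : 0 < C)
    (hε : 0 < ε) (hAbar : 0 < Abar) (hPbar : 0 < Pbar)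
    (Hb Qbar θ : ℝ) (hθ : θ ∈ Set.Icc (0 : ℝ) 1)
    (H0 Hbd Q0 QN : ℕ → ℝ)
    (hH0 : ∀ i, 1 ≤ i → i ≤ N → Hb < H0 i)
    (hHbd : ∀ j, 1 ≤ j → j ≤ T → Hb < Hbd j)
    (x : HydIdx N T → ℝ)
    (hx : ∀ p : Fin (N - 1) × Fin T, Hb < x (Sum.inl p)) :
    LinearIndependent ℝ
        (fun r : HydIdx N T =>
          fderiv ℝ (hydRes N T H0 Hbd Q0 QN g w Hb Δx Δt C ε Abar Pbar Qbar θ r) x)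
    ∧ Submodule.span ℝ
        (Set.range fun r : HydIdx N T =>
          fderiv ℝ (hydRes N T H0 Hbd Q0 QN g w Hb Δx Δt C ε Abar Pbar Qbar θ r) x) = ⊤ :=
  HydAux2.hydRes_key N T hN hT g w Δx Δt C ε Abar Pbar hg hw hΔx hΔt hC hε hAbar hPbar
    Hb Qbar θ hθ H0 Hbd Q0 QN hH0 hHbd x hx
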